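/- Suppose z0 ∈ Σ is a locally optimal solution of problem (MP), assumptions (A1), (A2), (A3) hold, and the continuous linear map DF(z0) : Z → E is surjective. Then for each critical direction d ∈ C0[z0], there exists no z ∈ Z satisfying simultaneously: Df(z0)z + (1/2)·D²f(z0)(d,d) < 0; DH_i(z0)z + (1/2)·D²H_i(z0)(d,d) < 0 for every index i with H_i(z0) = 0; DF(z0)z + (1/2)·D²F(z0)(d,d) = 0; and DG(z0)z + (1/2)·D²G(z0)(d,d) ∈ cone(int K − G(z0)). -/

import Mathlib

open Filter Asymptotics Metric Set

/-- Integrate a little-o bound on a derivative: if `ρ 0 = 0` and `ρ' = o(t)` then `ρ = o(t²)`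
(from the right). -/
lemma littleO_sq_of_deriv {X : Type*} [NormedAddCommGroup X] [NormedSpace ℝ X]
    {ρ ρ' : ℝ → X} {u : Set ℝ} (hu : u ∈ nhds (0:ℝ)) (hρ0 : ρ 0 = 0)
    (hder : ∀ t ∈ u, HasDerivAt ρ (ρ' t) t)
    (hlo : ρ' =o[nhds (0:ℝ)] id) :
    ρ =o[nhdsWithin (0:ℝ) (Set.Ioi 0)] (fun t => t^2) := by
  rw [isLittleO_iff]
  intro c hc
  have h1 : ∀ᶠ s in nhds (0:ℝ), ‖ρ' s‖ ≤ c * ‖s‖ := (isLittleO_iff.1 hlo) hc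
  obtain ⟨δ, hδ, hδsub⟩ := Metric.mem_nhds_iff.1 ((inter_mem hu h1) : _ ∈ nhds (0:ℝ))
  filter_upwards [Ioo_mem_nhdsGT hδ] with t ht
  obtain ⟨ht0, htδ⟩ := ht
  have hsub : Set.Icc (0:ℝ) t ⊆ Metric.ball 0 δ := by
    intro s hs
    simp only [Metric.mem_ball, Real.dist_eq, sub_zero]
    rw [abs_of_nonneg hs.1]
    exact lt_of_le_of_lt hs.2 htδ
  have key := norm_image_sub_le_of_norm_deriv_le_segment'
    (f := ρ) (f' := ρ') (a := 0) (b := t) (C := c * t)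
    (fun s hs => ((hder s (hδsub (hsub hs)).1).hasDerivWithinAt))
    (fun s hs => by
      have h2 := (hδsub (hsub ⟨hs.1, hs.2.le⟩)).2
      have : ‖s‖ ≤ t := by rw [Real.norm_eq_abs, abs_of_nonneg hs.1]; exact hs.2.le
      calc ‖ρ' s‖ ≤ c * ‖s‖ := h2
        _ ≤ c * t := by nlinarith)
    t (Set.right_mem_Icc.2 ht0.le)
  rw [hρ0, sub_zero, sub_zero] at key
  calc ‖ρ t‖ ≤ c * t * t := key
    _ = c * ‖t^2‖ := by rw [Real.norm_eq_abs, abs_of_nonneg (by positivity)]; ring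

/-- Quadratic Taylor expansion of a `C²` map along the curve `t ↦ z0 + t•d + t²•z`. -/
lemma quadExpand {Z X : Type*} [NormedAddCommGroup Z] [NormedSpace ℝ Z]
    [NormedAddCommGroup X] [NormedSpace ℝ X]
    {φ : Z → X} {z0 : Z} (hφ : ContDiffAt ℝ 2 φ z0) (d z : Z) :
    (fun t : ℝ => φ (z0 + t • d + t^2 • z) - φ z0 - t • (fderiv ℝ φ z0 d)
      - t^2 • (fderiv ℝ φ z0 z + (2⁻¹ : ℝ) • (fderiv ℝ (fderiv ℝ φ) z0 d d)))
    =o[nhdsWithin (0:ℝ) (Set.Ioi 0)] fun t => t^2 := by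
  set c : ℝ → Z := fun t => z0 + t • d + t^2 • z with hc_def
  have hc0 : c 0 = z0 := by simp [hc_def]
  have hcder : ∀ t : ℝ, HasDerivAt c (d + (2*t) • z) t := by
    intro t
    have h1 : HasDerivAt (fun s : ℝ => s • d) ((1:ℝ) • d) t := (hasDerivAt_id t).smul_const d
    have h2 : HasDerivAt (fun s : ℝ => s^2 • z) ((2*t^1) • z) t :=
      (hasDerivAt_pow 2 t).smul_const z
    have : HasDerivAt (fun s : ℝ => z0 + s • d + s^2 • z) ((0 + (1:ℝ) • d) + (2*t^1) • z) t :=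
      ((hasDerivAt_const t z0).add h1).add h2
    simpa using this
  have hccont : Continuous c := by fun_prop
  -- eventual differentiability of φ near z0
  have hev : ∀ᶠ y in nhds z0, ContDiffAt ℝ 2 φ y := hφ.eventually (by simp)
  have hdiff : ∀ᶠ y in nhds z0, DifferentiableAt ℝ φ y :=
    hev.mono fun y hy => hy.differentiableAt two_ne_zero
  -- pull back along c
  have hct : Filter.Tendsto c (nhds 0) (nhds z0) := by
    have := hccont.tendsto 0; rwa [hc0] at this
  have hdiffc : ∀ᶠ t in nhds (0:ℝ), DifferentiableAt ℝ φ (c t) := hct.eventually hdiff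
  obtain ⟨u, hu, hu'⟩ := hdiffc.exists_mem
  set ψ' : ℝ → X := fun t => (fderiv ℝ φ (c t)) (d + (2*t) • z) with hψ'_def
  set M : X := fderiv ℝ φ z0 z + (2⁻¹ : ℝ) • (fderiv ℝ (fderiv ℝ φ) z0 d d) with hM_def
  set ρ : ℝ → X := fun t => φ (c t) - φ z0 - t • (fderiv ℝ φ z0 d) - t^2 • M with hρ_def
  have hρder : ∀ t ∈ u, HasDerivAt ρ (ψ' t - fderiv ℝ φ z0 d - (2*t) • M) t := by
    intro t ht
    have h1 : HasDerivAt (fun s => φ (c s)) (ψ' t) t :=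
      ((hu' t ht).hasFDerivAt).comp_hasDerivAt t (hcder t)
    have h2 : HasDerivAt (fun s : ℝ => s • (fderiv ℝ φ z0 d)) ((1:ℝ) • (fderiv ℝ φ z0 d)) t :=
      (hasDerivAt_id t).smul_const _
    have h3 : HasDerivAt (fun s : ℝ => s^2 • M) ((2*t^1) • M) t := (hasDerivAt_pow 2 t).smul_const M
    have H : HasDerivAt (fun s => φ (c s) - φ z0 - s • (fderiv ℝ φ z0 d) - s^2 • M)
        (ψ' t - 0 - (1:ℝ) • (fderiv ℝ φ z0 d) - (2*t^1) • M) t :=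
      ((h1.sub (hasDerivAt_const t (φ z0))).sub h2).sub h3
    convert H using 1
    simp
  -- derivative of ψ' at 0 is D²φ d d + 2 • Dφ z, hence ρ' = o(t)
  have hfd : DifferentiableAt ℝ (fderiv ℝ φ) z0 :=
    (hφ.fderiv_right (m := 1) (by norm_num)).differentiableAt one_ne_zero
  have hA : HasDerivAt (fun t => fderiv ℝ φ (c t)) (fderiv ℝ (fderiv ℝ φ) z0 d) 0 := by
    have h := hfd.hasFDerivAt
    rw [← hc0] at h
    have h0 : HasDerivAt c d 0 := by simpa using hcder 0
    have h2 := h.comp_hasDerivAt 0 h0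
    simp only [Function.comp_def, hc0] at h2
    exact h2
  have hv : HasDerivAt (fun t : ℝ => d + (2*t) • z) ((2:ℝ) • z) 0 := by
    have h1 : HasDerivAt (fun t : ℝ => (2*t) • z) ((2*1 : ℝ) • z) 0 :=
      (((hasDerivAt_id (0:ℝ)).const_mul 2)).smul_const z
    have : HasDerivAt (fun t : ℝ => d + (2*t) • z) (0 + (2*1 : ℝ) • z) 0 :=
      (hasDerivAt_const (0:ℝ) d).add h1
    simpa using this
  have hψ'der : HasDerivAt ψ' (fderiv ℝ (fderiv ℝ φ) z0 d d + (2:ℝ) • (fderiv ℝ φ z0 z)) 0 := by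
    have h := hA.clm_apply hv
    convert h using 1
    simp [hc0]
  have hρ'lo : (fun t => ψ' t - fderiv ℝ φ z0 d - (2*t) • M) =o[nhds (0:ℝ)] id := by
    have hder2 : HasDerivAt (fun t => ψ' t - fderiv ℝ φ z0 d - (2*t) • M) 0 0 := by
      have h2 : HasDerivAt (fun t : ℝ => (2*t) • M) ((2*1:ℝ) • M) 0 :=
        ((hasDerivAt_id (0:ℝ)).const_mul 2).smul_const M
      have : HasDerivAt (fun t => ψ' t - fderiv ℝ φ z0 d - (2*t) • M)
          (fderiv ℝ (fderiv ℝ φ) z0 d d + (2:ℝ) • (fderiv ℝ φ z0 z) - 0 - (2*1:ℝ) • M) 0 :=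
        (hψ'der.sub (hasDerivAt_const (0:ℝ) (fderiv ℝ φ z0 d))).sub h2
      convert this using 1
      rw [hM_def]
      module
    have h0' : ψ' 0 = fderiv ℝ φ z0 d := by simp [hψ'_def, hc0]
    have h2 := hasDerivAt_iff_isLittleO.1 hder2
    simp only [sub_zero, smul_zero, mul_zero, zero_smul, h0', sub_self] at h2
    exact h2
  have hρ0 : ρ 0 = 0 := by simp [hρ_def, hc0]
  exact littleO_sq_of_deriv hu hρ0 hρder hρ'lo



/-- The cone generated by `S - x`: all positive multiples of differences `s - x`, `s ∈ S`. -/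
def coneOf {W : Type*} [AddCommGroup W] [Module ℝ W] (S : Set W) (x : W) : Set W :=
  {w | ∃ t : ℝ, 0 < t ∧ ∃ s ∈ S, w = t • (s - x)}

set_option maxHeartbeats 1000000 in
/-- Second-order condition: for a locally optimal solution `z0` of (MP) with (A1)-(A3) and
`DF(z0)` surjective, for each critical direction `d`, the auxiliary system has no solution. -/
theorem no_solution_second_order_system
    {Z E W : Type*}
    [NormedAddCommGroup Z] [NormedSpace ℝ Z] [CompleteSpace Z]
    [NormedAddCommGroup E] [NormedSpace ℝ E] [CompleteSpace E]
    [NormedAddCommGroup W] [NormedSpace ℝ W] [CompleteSpace W]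
    (m : ℕ) (f : Z → ℝ) (F : Z → E) (H : Fin m → Z → ℝ) (G : Z → W)
    (K : Set W) (hKconv : Convex ℝ K) (hKne : K.Nonempty)
    (z0 : Z)
    -- z0 ∈ Σ (feasibility)
    (hFz0 : F z0 = 0) (hHz0 : ∀ i, H i z0 ≤ 0) (hGz0 : G z0 ∈ K)
    -- local optimality
    (hopt : ∃ U ∈ nhds z0, ∀ z ∈ U,
      F z = 0 → (∀ i, H i z ≤ 0) → G z ∈ K → f z0 ≤ f z)
    -- (A1)
    (hA1 : (interior K).Nonempty)
    -- (A2)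
    (hf : ContDiffAt ℝ 2 f z0) (hF : ContDiffAt ℝ 2 F z0)
    (hH : ∀ i, ContDiffAt ℝ 2 (H i) z0) (hG : ContDiffAt ℝ 2 G z0)
    -- (A3)
    (hA3 : IsClosed (Set.range ⇑(fderiv ℝ F z0)))
    -- DF(z0) surjective
    (hsurj : Function.Surjective ⇑(fderiv ℝ F z0))
    -- d is a critical direction: d ∈ C0[z0]
    (d : Z)
    (hd1 : fderiv ℝ f z0 d ≤ 0)
    (hd2 : fderiv ℝ F z0 d = 0)
    (hd3 : ∀ i, H i z0 = 0 → fderiv ℝ (H i) z0 d ≤ 0)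
    (hd4 : fderiv ℝ G z0 d ∈ coneOf K (G z0)) :
    ¬ ∃ z : Z,
      (fderiv ℝ f z0 z + (1 / 2) * (fderiv ℝ (fderiv ℝ f) z0 d d) < 0) ∧
      (∀ i, H i z0 = 0 →
        fderiv ℝ (H i) z0 z + (1 / 2) * (fderiv ℝ (fderiv ℝ (H i)) z0 d d) < 0) ∧
      (fderiv ℝ F z0 z + (1 / 2 : ℝ) • (fderiv ℝ (fderiv ℝ F) z0 d d) = 0) ∧
      (fderiv ℝ G z0 z + (1 / 2 : ℝ) • (fderiv ℝ (fderiv ℝ G) z0 d d)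
        ∈ coneOf (interior K) (G z0)) := by
  rintro ⟨z, hz1, hz2, hz3, hz4⟩
  obtain ⟨U, hU, hUopt⟩ := hopt
  classical
  set L := nhdsWithin (0:ℝ) (Set.Ioi 0) with hL
  set x : ℝ → Z := fun t => z0 + t • d + t^2 • z with hx
  -- expansion of F along the curve
  have hz3' : fderiv ℝ F z0 z + (2⁻¹:ℝ) • (fderiv ℝ (fderiv ℝ F) z0 d d) = 0 := by
    rw [show (2⁻¹:ℝ) = 1/2 by norm_num]; exact hz3
  have EF : (fun t => F (x t)) =o[L] (fun t => t^2) := by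
    have h := quadExpand hF d z
    simp only [hFz0, hd2, hz3', smul_zero, sub_zero] at h
    exact h
  -- nonlinear right inverse of A = DF(z0)
  have hrange : LinearMap.range (fderiv ℝ F z0 : Z →ₗ[ℝ] E) = ⊤ := LinearMap.range_eq_top.2 hsurj
  set B := (fderiv ℝ F z0).nonlinearRightInverseOfSurjective hrange with hB
  have hNpos : (0:ℝ) < (B.nnnorm : ℝ) := by
    exact_mod_cast (fderiv ℝ F z0).nonlinearRightInverseOfSurjective_nnnorm_pos hrange
  set N : ℝ := (B.nnnorm : ℝ) with hN
  set ε : ℝ → ℝ := fun t => 2 * N * ‖F (x t)‖ with hε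
  have hεnn : ∀ t, 0 ≤ ε t := fun t => by positivity
  have Eε : ε =o[L] (fun t => t^2) := EF.norm_left.const_mul_left (2*N)
  have tendsto_x : Filter.Tendsto x L (nhds z0) := by
    have hcont : Continuous x := by fun_prop
    have := hcont.tendsto 0
    simp only [hx] at this ⊢
    have hx0 : z0 + (0:ℝ) • d + (0:ℝ)^2 • z = z0 := by simp
    rw [hx0] at this
    exact this.mono_left nhdsWithin_le_nhds
  have ht2_tendsto : Filter.Tendsto (fun t : ℝ => t^2) L (nhds 0) := by
    have := (continuous_pow 2).tendsto (0:ℝ)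
    simp only [ne_eq, OfNat.ofNat_ne_zero, not_false_eq_true, zero_pow] at this
    exact this.mono_left nhdsWithin_le_nhds
  have tendsto_ε : Filter.Tendsto ε L (nhds 0) := Eε.isBigO.trans_tendsto ht2_tendsto
  -- any neighborhood of z0 eventually contains the whole ball
  have hball : ∀ V ∈ nhds z0, ∀ᶠ t in L, ∀ w ∈ Metric.closedBall (x t) (ε t), w ∈ V := by
    intro V hV
    obtain ⟨r, hr, hrV⟩ := Metric.mem_nhds_iff.1 hV
    have h0 : Filter.Tendsto (fun t => dist (x t) z0 + ε t) L (nhds 0) := by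
      have h1 : Filter.Tendsto (fun t => dist (x t) z0) L (nhds 0) := by
        have := tendsto_x.dist (tendsto_const_nhds (x := z0))
        simpa using this
      simpa using h1.add tendsto_ε
    filter_upwards [h0.eventually_lt_const hr] with t ht w hw
    apply hrV
    simp only [Metric.mem_ball]
    calc dist w z0 ≤ dist w (x t) + dist (x t) z0 := dist_triangle _ _ _
      _ ≤ ε t + dist (x t) z0 := by
          have := Metric.mem_closedBall.1 hw; linarith
      _ < r := by linarith
  -- Graves-type correction
  have hsd : HasStrictFDerivAt F (fderiv ℝ F z0) z0 := hF.hasStrictFDerivAt two_ne_zero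
  set c0 : NNReal := B.nnnorm⁻¹ / 2 with hc0
  have hc0pos : 0 < c0 := by
    have : (0:NNReal) < B.nnnorm :=
      (fderiv ℝ F z0).nonlinearRightInverseOfSurjective_nnnorm_pos hrange
    positivity
  obtain ⟨s, hs, happrox⟩ := hsd.approximates_deriv_on_nhds (Or.inr hc0pos)
  have graves : ∀ᶠ t in L, ∃ w ∈ Metric.closedBall (x t) (ε t), F w = 0 := by
    filter_upwards [hball s hs] with t ht
    have hsub : Metric.closedBall (x t) (ε t) ⊆ s := fun w hw => ht w hw
    have hsurj2 := happrox.surjOn_closedBall_of_nonlinearRightInverse B (hεnn t) hsub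
    have hrad : ((B.nnnorm:ℝ)⁻¹ - (c0:ℝ)) * ε t = ‖F (x t)‖ := by
      have hcast : (c0:ℝ) = N⁻¹ / 2 := by
        rw [hc0, hN]; push_cast; ring
      rw [hcast, hε]
      simp only [← hN]
      field_simp
      ring
    have hmem : (0:E) ∈ Metric.closedBall (F (x t)) (((B.nnnorm:ℝ)⁻¹ - (c0:ℝ)) * ε t) := by
      rw [Metric.mem_closedBall, hrad, dist_zero_left]
    obtain ⟨w, hw, hFw⟩ := hsurj2 hmem
    exact ⟨w, hw, hFw⟩
  -- generic strict-decrease lemma for real-valued C² functions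
  have key : ∀ (ψ : Z → ℝ), ContDiffAt ℝ 2 ψ z0 → fderiv ℝ ψ z0 d ≤ 0 →
      fderiv ℝ ψ z0 z + (1/2) * (fderiv ℝ (fderiv ℝ ψ) z0 d d) < 0 →
      ∀ᶠ t in L, ∀ w ∈ Metric.closedBall (x t) (ε t), ψ w < ψ z0 := by
    intro ψ hψ ha hb
    obtain ⟨Lψ, sψ, hsψ, hLψ⟩ := (hψ.of_le one_le_two).exists_lipschitzOnWith
    set a := fderiv ℝ ψ z0 d with hadef
    set b := fderiv ℝ ψ z0 z + (2⁻¹:ℝ) * (fderiv ℝ (fderiv ℝ ψ) z0 d d) with hbdef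
    have hb' : b < 0 := by
      rw [hbdef, show (2⁻¹:ℝ) = 1/2 by norm_num]; exact hb
    have Eψ : (fun t => ψ (x t) - ψ z0 - t * a - t^2 * b) =o[L] (fun t => t^2) := by
      have h := quadExpand hψ d z
      simpa [smul_eq_mul] using h
    have hbound := (Asymptotics.isLittleO_iff.1 Eψ) (c := -b/4) (by linarith)
    have hLbound := (Asymptotics.isLittleO_iff.1 (Eε.const_mul_left (Lψ:ℝ)))
      (c := -b/4) (by linarith)
    filter_upwards [hbound, hLbound, hball sψ hsψ, self_mem_nhdsWithin] with t h1 h2 h3 ht0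
    intro w hw
    have ht0' : (0:ℝ) < t := ht0
    have ht2 : (0:ℝ) < t^2 := by positivity
    have hxmem : x t ∈ sψ := h3 (x t) (Metric.mem_closedBall_self (hεnn t))
    have hwmem : w ∈ sψ := h3 w hw
    have hlip : ψ w - ψ (x t) ≤ (Lψ:ℝ) * ε t := by
      have hd := (lipschitzOnWith_iff_dist_le_mul.1 hLψ) w hwmem (x t) hxmem
      have hdw : dist w (x t) ≤ ε t := Metric.mem_closedBall.1 hw
      have h5 : dist (ψ w) (ψ (x t)) ≤ (Lψ:ℝ) * ε t :=
        hd.trans (mul_le_mul_of_nonneg_left hdw (NNReal.coe_nonneg Lψ))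
      calc ψ w - ψ (x t) ≤ |ψ w - ψ (x t)| := le_abs_self _
        _ = dist (ψ w) (ψ (x t)) := (Real.dist_eq _ _).symm
        _ ≤ (Lψ:ℝ) * ε t := h5
    have h1' : ψ (x t) - ψ z0 - t * a - t^2 * b ≤ (-b/4) * t^2 := by
      have := h1
      rw [Real.norm_eq_abs, Real.norm_eq_abs, abs_of_nonneg (le_of_lt ht2)] at this
      exact (abs_le.1 this).2
    have h2' : (Lψ:ℝ) * ε t ≤ (-b/4) * t^2 := by
      have := h2
      rw [Real.norm_eq_abs, Real.norm_eq_abs, abs_of_nonneg (le_of_lt ht2)] at this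
      calc (Lψ:ℝ) * ε t ≤ |(Lψ:ℝ) * ε t| := le_abs_self _
        _ ≤ (-b/4) * t^2 := this
    have hta : t * a ≤ 0 := mul_nonpos_of_nonneg_of_nonpos (le_of_lt ht0') ha
    nlinarith [h1', h2', hlip, hta, mul_pos ht2 (neg_pos.2 hb')]
  -- the inequality constraints
  have hHall : ∀ᶠ t in L, ∀ w ∈ Metric.closedBall (x t) (ε t), ∀ i, H i w ≤ 0 := by
    have hper : ∀ i, ∀ᶠ t in L, ∀ w ∈ Metric.closedBall (x t) (ε t), H i w ≤ 0 := by
      intro i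
      by_cases hia : H i z0 = 0
      · filter_upwards [key (H i) (hH i) (hd3 i hia) (hz2 i hia)] with t ht w hw
        have := ht w hw
        rw [hia] at this
        exact this.le
      · have hneg : H i z0 < 0 := lt_of_le_of_ne (hHz0 i) hia
        obtain ⟨Li, si, hsi, hLi⟩ := ((hH i).of_le one_le_two).exists_lipschitzOnWith
        have hcont : Filter.Tendsto (fun t => H i (x t)) L (nhds (H i z0)) :=
          ((hH i).continuousAt.tendsto).comp tendsto_x
        have hsum : Filter.Tendsto (fun t => H i (x t) + (Li:ℝ) * ε t) L (nhds (H i z0)) := by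
          have := hcont.add (tendsto_ε.const_mul (Li:ℝ))
          simpa using this
        have hev : ∀ᶠ t in L, H i (x t) + (Li:ℝ) * ε t < 0 :=
          hsum.eventually_lt_const hneg
        filter_upwards [hev, hball si hsi] with t h1 h2 w hw
        have hxmem : x t ∈ si := h2 (x t) (Metric.mem_closedBall_self (hεnn t))
        have hwmem : w ∈ si := h2 w hw
        have hlip : H i w - H i (x t) ≤ (Li:ℝ) * ε t := by
          have hd' := (lipschitzOnWith_iff_dist_le_mul.1 hLi) w hwmem (x t) hxmem
          have hdw : dist w (x t) ≤ ε t := Metric.mem_closedBall.1 hw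
          have h5 := hd'.trans (mul_le_mul_of_nonneg_left hdw (NNReal.coe_nonneg Li))
          calc H i w - H i (x t) ≤ |H i w - H i (x t)| := le_abs_self _
            _ = dist (H i w) (H i (x t)) := (Real.dist_eq _ _).symm
            _ ≤ _ := h5
        linarith
    exact Filter.eventually_all.2 hper |>.mono (fun t ht w hw i => ht i w hw)
  -- the convex constraint G w ∈ K
  obtain ⟨τ₁, hτ₁, k₁, hk₁, hs1⟩ := hd4
  obtain ⟨τ₂, hτ₂, k₂, hk₂, hs2⟩ := hz4
  obtain ⟨ρK, hρK, hρsub⟩ := Metric.mem_nhds_iff.1 (mem_interior_iff_mem_nhds.1 hk₂)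
  have hk₂K : Metric.ball k₂ ρK ⊆ K := hρsub
  obtain ⟨LG, sG, hsG, hLG⟩ := (hG.of_le one_le_two).exists_lipschitzOnWith
  have hs2' : fderiv ℝ G z0 z + (2⁻¹:ℝ) • (fderiv ℝ (fderiv ℝ G) z0 d d)
      = τ₂ • (k₂ - G z0) := by
    rw [show (2⁻¹:ℝ) = 1/2 by norm_num]; exact hs2
  have EG : (fun t => G (x t) - G z0 - t • (τ₁ • (k₁ - G z0)) - t^2 • (τ₂ • (k₂ - G z0)))
      =o[L] (fun t => t^2) := by
    have h := quadExpand hG d z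
    rw [hs1, hs2'] at h
    exact h
  have hGbound := (Asymptotics.isLittleO_iff.1 EG) (c := ρK * τ₂ / 4) (by positivity)
  have hLGbound := (Asymptotics.isLittleO_iff.1 (Eε.const_mul_left (LG:ℝ)))
    (c := ρK * τ₂ / 4) (by positivity)
  have hsmall : ∀ᶠ t in L, t * τ₁ + t^2 * τ₂ ≤ 1 := by
    have htend : Filter.Tendsto (fun t : ℝ => t * τ₁ + t^2 * τ₂) L (nhds 0) := by
      have h1 : Filter.Tendsto (fun t : ℝ => t) L (nhds 0) :=
        tendsto_id.mono_left nhdsWithin_le_nhds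
      have := (h1.mul_const τ₁).add (ht2_tendsto.mul_const τ₂)
      simpa using this
    exact (htend.eventually_lt_const (by norm_num : (0:ℝ) < 1)).mono fun t ht => ht.le
  have hGmem : ∀ᶠ t in L, ∀ w ∈ Metric.closedBall (x t) (ε t), G w ∈ K := by
    filter_upwards [hGbound, hLGbound, hball sG hsG, hsmall, self_mem_nhdsWithin]
      with t h1 h2 h3 h4 ht0
    intro w hw
    have ht0' : (0:ℝ) < t := ht0
    have ht2 : (0:ℝ) < t^2 := by positivity
    set av := t * τ₁ with hav
    set bv := t^2 * τ₂ with hbv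
    have hapos : 0 < av := mul_pos ht0' hτ₁
    have hbpos : 0 < bv := mul_pos ht2 hτ₂
    set R := G w - G z0 - av • (k₁ - G z0) - bv • (k₂ - G z0) with hR
    have hxmem : x t ∈ sG := h3 (x t) (Metric.mem_closedBall_self (hεnn t))
    have hwmem : w ∈ sG := h3 w hw
    have hlip : ‖G w - G (x t)‖ ≤ (LG:ℝ) * ε t := by
      have hd' := (lipschitzOnWith_iff_dist_le_mul.1 hLG) w hwmem (x t) hxmem
      have hdw : dist w (x t) ≤ ε t := Metric.mem_closedBall.1 hw
      have h5 := hd'.trans (mul_le_mul_of_nonneg_left hdw (NNReal.coe_nonneg LG))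
      rwa [dist_eq_norm] at h5
    have hRbound : ‖R‖ ≤ ρK / 2 * bv := by
      have hsplit : R = (G w - G (x t))
          + (G (x t) - G z0 - t • (τ₁ • (k₁ - G z0)) - t^2 • (τ₂ • (k₂ - G z0))) := by
        rw [hR, hav, hbv, mul_smul, mul_smul]
        abel
      have h1' : ‖G (x t) - G z0 - t • (τ₁ • (k₁ - G z0)) - t^2 • (τ₂ • (k₂ - G z0))‖
          ≤ ρK * τ₂ / 4 * t^2 := by
        have := h1
        rw [Real.norm_eq_abs, abs_of_nonneg ht2.le] at this
        exact this
      have h2' : (LG:ℝ) * ε t ≤ ρK * τ₂ / 4 * t^2 := by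
        have := h2
        rw [Real.norm_eq_abs, Real.norm_eq_abs, abs_of_nonneg ht2.le] at this
        calc (LG:ℝ) * ε t ≤ |(LG:ℝ) * ε t| := le_abs_self _
          _ ≤ _ := this
      calc ‖R‖ ≤ ‖G w - G (x t)‖
            + ‖G (x t) - G z0 - t • (τ₁ • (k₁ - G z0)) - t^2 • (τ₂ • (k₂ - G z0))‖ := by
            rw [hsplit]; exact norm_add_le _ _
        _ ≤ ρK * τ₂ / 4 * t^2 + ρK * τ₂ / 4 * t^2 := add_le_add (hlip.trans h2') h1'
        _ = ρK / 2 * bv := by rw [hbv]; ring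
    set k₂' := k₂ + bv⁻¹ • R with hk₂'def
    have hk₂'K : k₂' ∈ K := by
      apply hk₂K
      rw [Metric.mem_ball, hk₂'def, dist_eq_norm, add_sub_cancel_left, norm_smul,
        Real.norm_eq_abs, abs_of_pos (inv_pos.2 hbpos)]
      calc bv⁻¹ * ‖R‖ ≤ bv⁻¹ * (ρK / 2 * bv) :=
            mul_le_mul_of_nonneg_left hRbound (inv_pos.2 hbpos).le
        _ = ρK / 2 := by field_simp
        _ < ρK := by linarith
    have habne : av + bv ≠ 0 := ne_of_gt (add_pos hapos hbpos)
    have hq : (av/(av+bv)) • k₁ + (bv/(av+bv)) • k₂' ∈ K :=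
      hKconv hk₁ hk₂'K (div_nonneg hapos.le (add_pos hapos hbpos).le)
        (div_nonneg hbpos.le (add_pos hapos hbpos).le) (by field_simp)
    have hcomb : (1 - (av+bv)) • G z0 + (av+bv) • ((av/(av+bv)) • k₁ + (bv/(av+bv)) • k₂') ∈ K :=
      hKconv hGz0 hq (by linarith) (add_pos hapos hbpos).le (by ring)
    have heq : G w = (1 - (av+bv)) • G z0
        + (av+bv) • ((av/(av+bv)) • k₁ + (bv/(av+bv)) • k₂') := by
      have h6 : (av+bv) • ((av/(av+bv)) • k₁ + (bv/(av+bv)) • k₂')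
          = av • k₁ + bv • k₂' := by
        rw [smul_add, smul_smul, smul_smul, mul_div_cancel₀ _ habne, mul_div_cancel₀ _ habne]
      have h5 : bv • k₂' = bv • k₂ + R := by
        rw [hk₂'def, smul_add, smul_inv_smul₀ (ne_of_gt hbpos)]
      rw [h6, h5, hR]
      module
    rw [heq]
    exact hcomb
  -- assemble and contradict local optimality
  have main : ∀ᶠ t in L, ∃ w, F w = 0 ∧ (∀ i, H i w ≤ 0) ∧ G w ∈ K ∧ w ∈ U ∧ f w < f z0 := by
    filter_upwards [graves, hHall, hGmem, hball U hU, key f hf hd1 hz1]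
      with t hg hH' hG' hU' hf'
    obtain ⟨w, hw, hFw⟩ := hg
    exact ⟨w, hFw, fun i => hH' w hw i, hG' w hw, hU' w hw, hf' w hw⟩
  obtain ⟨t, w, hFw, hHw, hGw, hUw, hfw⟩ := main.exists
  exact absurd (hUopt w hUw hFw hHw hGw) (not_le.2 hfw)
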